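/- Let f' : GL(d,ℝ) → ℝ be an invariant function with variation function F', let ε₁,…,ε_k ∈ {±1}, and define f : GL(d,ℝ)^k → ℝ by f(g₁,…,g_k) = f'(g₁^{ε₁}·g₂^{ε₂}⋯g_k^{ε_k}). Then for every index i with ε_i = −1, the i-th variation function of f is given by F_i(g₁,…,g_k) = −F'(g_{i+1}^{ε_{i+1}}⋯g_k^{ε_k}·g₁^{ε₁}⋯g_{i−1}^{ε_{i−1}}·g_i^{−1}). -/

import Mathlib

open Matrix

attribute [local instance] Matrix.normedAddCommGroup Matrix.normedSpace

noncomputable section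

/-- An invariant multi-function on `GL(d,ℝ)^k`: a real-valued function on `k`-tuples of
`d × d` real matrices that is differentiable on the open set of tuples of invertible
matrices and invariant under the diagonal action of `GL(d,ℝ)` by conjugation. -/
def IsInvariantFun (d k : ℕ) (f : (Fin k → Matrix (Fin d) (Fin d) ℝ) → ℝ) : Prop :=
  DifferentiableOn ℝ f {g : Fin k → Matrix (Fin d) (Fin d) ℝ | ∀ i, IsUnit (g i)} ∧
  ∀ h : Matrix (Fin d) (Fin d) ℝ, IsUnit h →
    ∀ g : Fin k → Matrix (Fin d) (Fin d) ℝ, (∀ i, IsUnit (g i)) →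
      f (fun i => h * g i * h⁻¹) = f g

/-- `F` is the tuple of variation functions of `f` with respect to the trace form
`𝔅(X,Y) = tr (X*Y)`: the matrix `F j g` satisfies that `tr (F j g * X)` is the derivative
at `t = 0` of `t ↦ f (g₁, …, exp(tX)·g_j, …, g_k)`, for every `X`. -/
def IsVariationFun (d k : ℕ) (f : (Fin k → Matrix (Fin d) (Fin d) ℝ) → ℝ)
    (F : Fin k → (Fin k → Matrix (Fin d) (Fin d) ℝ) → Matrix (Fin d) (Fin d) ℝ) : Prop :=
  ∀ (j : Fin k) (g : Fin k → Matrix (Fin d) (Fin d) ℝ), (∀ i, IsUnit (g i)) →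
    ∀ X : Matrix (Fin d) (Fin d) ℝ,
      HasDerivAt
        (fun t : ℝ => f (Function.update g j (NormedSpace.exp (t • X) * g j)))
        (Matrix.trace (F j g * X)) 0

/-- An invariant function on `GL(d,ℝ)`: a real-valued function on `d × d` real matrices
that is differentiable on the open set of invertible matrices and invariant under
conjugation. -/
def IsInvariantFunOne (d : ℕ) (f : Matrix (Fin d) (Fin d) ℝ → ℝ) : Prop :=
  DifferentiableOn ℝ f {g : Matrix (Fin d) (Fin d) ℝ | IsUnit g} ∧
  ∀ h : Matrix (Fin d) (Fin d) ℝ, IsUnit h →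
    ∀ g : Matrix (Fin d) (Fin d) ℝ, IsUnit g → f (h * g * h⁻¹) = f g

/-- `F` is the variation function of `f : GL(d,ℝ) → ℝ` with respect to the trace form:
`tr (F g * X)` is the derivative at `t = 0` of `t ↦ f (exp(tX)·g)`, for every `X`. -/
def IsVariationFunOne (d : ℕ) (f : Matrix (Fin d) (Fin d) ℝ → ℝ)
    (F : Matrix (Fin d) (Fin d) ℝ → Matrix (Fin d) (Fin d) ℝ) : Prop :=
  ∀ g : Matrix (Fin d) (Fin d) ℝ, IsUnit g → ∀ X : Matrix (Fin d) (Fin d) ℝ,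
    HasDerivAt (fun t : ℝ => f (NormedSpace.exp (t • X) * g))
      (Matrix.trace (F g * X)) 0

/-- The word map `(g₁, …, g_k) ↦ g₁^{ε₁} · g₂^{ε₂} ⋯ g_k^{ε_k}` on tuples of matrices. -/
def wordProd {d k : ℕ} (ε : Fin k → ℤ) (g : Fin k → Matrix (Fin d) (Fin d) ℝ) :
    Matrix (Fin d) (Fin d) ℝ :=
  (List.ofFn fun i => g i ^ ε i).prod


lemma eq_zero_of_trace_mul_eq_zero {d : ℕ} {N : Matrix (Fin d) (Fin d) ℝ}
    (h : ∀ X : Matrix (Fin d) (Fin d) ℝ, Matrix.trace (N * X) = 0) : N = 0 := by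
  ext a b
  have := h (Matrix.single b a 1)
  simpa [Matrix.trace, Matrix.diag, Matrix.mul_apply, Matrix.single,
    ite_and, Finset.sum_ite_eq] using this

lemma ofFn_update_pow {d k : ℕ} (ε : Fin k → ℤ) (g : Fin k → Matrix (Fin d) (Fin d) ℝ)
    (i : Fin k) (u : Matrix (Fin d) (Fin d) ℝ) :
    (List.ofFn fun l => (Function.update g i u l) ^ ε l)
      = (List.ofFn fun l => g l ^ ε l).set (i : ℕ) (u ^ ε i) := by
  apply List.ext_getElem
  · simp
  · intro n h1 h2
    simp only [List.getElem_set, List.getElem_ofFn]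
    by_cases hn : (i : ℕ) = n
    · have he : (⟨n, by simpa using h1⟩ : Fin k) = i := Fin.ext hn.symm
      rw [if_pos hn, he, Function.update_self]
    · rw [if_neg hn, Function.update_apply,
        if_neg (show (⟨n, by simpa using h1⟩ : Fin k) ≠ i from
          fun e => hn (congrArg Fin.val e).symm)]

/-- if `f'` is an invariant function on `GL(d,ℝ)` with variation function `F'`,
`ε_i ∈ {±1}`, and `f (g₁,…,g_k) = f' (g₁^{ε₁} ⋯ g_k^{ε_k})`, then for every index `i` with
`ε_i = -1` the `i`-th variation function of `f` is
`F_i (g₁,…,g_k) = -F' (g_{i+1}^{ε_{i+1}} ⋯ g_k^{ε_k} · g₁^{ε₁} ⋯ g_{i-1}^{ε_{i-1}} · g_i⁻¹)`. -/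
theorem variation_of_word_function_negative_exponent (d k : ℕ)
    (f' : Matrix (Fin d) (Fin d) ℝ → ℝ)
    (F' : Matrix (Fin d) (Fin d) ℝ → Matrix (Fin d) (Fin d) ℝ)
    (hf' : IsInvariantFunOne d f') (hF' : IsVariationFunOne d f' F')
    (ε : Fin k → ℤ) (hε : ∀ i, ε i = 1 ∨ ε i = -1)
    (F : Fin k → (Fin k → Matrix (Fin d) (Fin d) ℝ) → Matrix (Fin d) (Fin d) ℝ)
    (hF : IsVariationFun d k (fun g => f' (wordProd ε g)) F)
    (i : Fin k) (hi : ε i = -1)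
    (g : Fin k → Matrix (Fin d) (Fin d) ℝ) (hg : ∀ l, IsUnit (g l)) :
    F i g = -F' (((List.ofFn fun l => g l ^ ε l).drop ((i : ℕ) + 1)).prod *
      ((List.ofFn fun l => g l ^ ε l).take (i : ℕ)).prod * (g i)⁻¹) := by
  set L := List.ofFn fun l => g l ^ ε l with hL
  set A := (L.take (i : ℕ)).prod with hA'
  set B := (L.drop ((i : ℕ) + 1)).prod with hB'
  set M := B * A * (g i)⁻¹ with hM
  have hLu : ∀ m ∈ L, IsUnit m := by
    intro m hm
    rw [hL, List.mem_ofFn] at hm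
    obtain ⟨l, rfl⟩ := hm
    show IsUnit (g l ^ ε l)
    rcases hε l with h | h <;> rw [h]
    · simpa using hg l
    · rw [Matrix.zpow_neg_one]
      exact Matrix.isUnit_nonsing_inv_iff.mpr (hg l)
  have hA : IsUnit A := List.prod_isUnit fun m hm => hLu m (List.mem_of_mem_take hm)
  have hB : IsUnit B := List.prod_isUnit fun m hm => hLu m (List.mem_of_mem_drop hm)
  have hCi : IsUnit (g i)⁻¹ := Matrix.isUnit_nonsing_inv_iff.mpr (hg i)
  have hMu : IsUnit M := (hB.mul hA).mul hCi
  have hAC : IsUnit (A * (g i)⁻¹) := hA.mul hCi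
  have hACdet : IsUnit (A * (g i)⁻¹).det := (Matrix.isUnit_iff_isUnit_det _).mp hAC
  have key : ∀ X : Matrix (Fin d) (Fin d) ℝ,
      Matrix.trace (F i g * X) = Matrix.trace ((-F' M) * X) := by
    intro X
    have hfun : (fun t : ℝ =>
        f' (wordProd ε (Function.update g i (NormedSpace.exp (t • X) * g i))))
        = fun t : ℝ => f' (NormedSpace.exp (t • (-X)) * M) := by
      funext t
      set E := NormedSpace.exp (t • (-X)) with hE
      have hEu : IsUnit E := Matrix.isUnit_exp _
      have hword : wordProd ε (Function.update g i (NormedSpace.exp (t • X) * g i))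
          = (A * (g i)⁻¹) * (E * B) := by
        rw [wordProd, ofFn_update_pow, List.prod_set, ← hL, ← hA', ← hB',
          if_pos (by simp [hL]), hi, Matrix.zpow_neg_one, Matrix.mul_inv_rev,
          ← Matrix.exp_neg, ← smul_neg]
        simp only [← hE, Matrix.mul_assoc]
      rw [hword]
      have h1 : IsUnit ((A * (g i)⁻¹) * (E * B)) := hAC.mul (hEu.mul hB)
      have h2 := hf'.2 (A * (g i)⁻¹)⁻¹ (Matrix.isUnit_nonsing_inv_iff.mpr hAC) _ h1
      rw [← h2, Matrix.nonsing_inv_nonsing_inv _ hACdet, ← Matrix.mul_assoc,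
        ← Matrix.mul_assoc, Matrix.nonsing_inv_mul _ hACdet, Matrix.one_mul]
      simp only [hM, Matrix.mul_assoc]
    have h1 := hF i g hg X
    simp only [hfun] at h1
    have h2 := hF' M hMu (-X)
    have := h1.unique h2
    rw [this, Matrix.mul_neg, ← Matrix.neg_mul]
  have hz : F i g - (-F' M) = 0 := by
    apply eq_zero_of_trace_mul_eq_zero
    intro X
    rw [Matrix.sub_mul, Matrix.trace_sub, key X, sub_self]
  exact sub_eq_zero.mp hz
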